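/- Let (Vₙ)_{n} be an orthonormal basis of a Hilbert space ℋ and (φₙ) a family with ‖φₙ - Vₙ‖ ≤ εₙ where (εₙ) ∈ ℓ². If the linear span of (φₙ) is dense in ℋ and the εₙ are small enough that the family is ω-linearly independent, then (φₙ) is a Riesz basis of ℋ: there exists a bounded invertible operator Φ on ℋ with Φ Vₙ = φₙ for all n. -/

import Mathlib

open scoped ComplexConjugate

local notation "⟪" x ", " y "⟫" => @inner ℂ _ _ x y

/-- Cauchy–Schwarz for tsums of nonnegative reals. -/
lemma bari_cs_summable {f g : ℕ → ℝ} (hf0 : ∀ n, 0 ≤ f n) (hg0 : ∀ n, 0 ≤ g n)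
    (hf : Summable (fun n => f n ^ 2)) (hg : Summable (fun n => g n ^ 2)) :
    Summable (fun n => f n * g n) := by
  refine Summable.of_nonneg_of_le (fun n => mul_nonneg (hf0 n) (hg0 n))
    (fun n => ?_) ((hf.add hg).div_const 2)
  have h := two_mul_le_add_sq (f n) (g n)
  nlinarith [h]

lemma bari_cs {f g : ℕ → ℝ} (hf0 : ∀ n, 0 ≤ f n) (hg0 : ∀ n, 0 ≤ g n)
    (hf : Summable (fun n => f n ^ 2)) (hg : Summable (fun n => g n ^ 2)) :
    ∑' n, f n * g n ≤ Real.sqrt (∑' n, f n ^ 2) * Real.sqrt (∑' n, g n ^ 2) := by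
  refine Summable.tsum_le_of_sum_le (bari_cs_summable hf0 hg0 hf hg) (fun s => ?_)
  have h1 : (∑ n ∈ s, f n * g n) ^ 2 ≤ (∑ n ∈ s, f n ^ 2) * (∑ n ∈ s, g n ^ 2) :=
    Finset.sum_mul_sq_le_sq_mul_sq s f g
  have h2 : ∑ n ∈ s, f n ^ 2 ≤ ∑' n, f n ^ 2 :=
    Summable.sum_le_tsum s (fun n _ => sq_nonneg _) hf
  have h3 : ∑ n ∈ s, g n ^ 2 ≤ ∑' n, g n ^ 2 :=
    Summable.sum_le_tsum s (fun n _ => sq_nonneg _) hg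
  have h4 : 0 ≤ ∑ n ∈ s, f n * g n :=
    Finset.sum_nonneg (fun n _ => mul_nonneg (hf0 n) (hg0 n))
  have := Real.sqrt_le_sqrt (le_trans h1 (mul_le_mul h2 h3 (Finset.sum_nonneg fun n _ => sq_nonneg _) (tsum_nonneg fun n => sq_nonneg _)))
  rwa [Real.sqrt_sq h4, Real.sqrt_mul (tsum_nonneg fun n => sq_nonneg _)] at this

section BariOp

variable {H : Type*} [NormedAddCommGroup H] [InnerProductSpace ℂ H] [CompleteSpace H]
variable {V : ℕ → H} {D : ℕ → H}

lemma bari_term_summable (hON : Orthonormal ℂ V)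
    (hD : Summable fun n => ‖D n‖ ^ 2) (x : H) :
    Summable fun n => ‖(⟪V n, x⟫ : ℂ) • D n‖ := by
  simpa [norm_smul] using
    bari_cs_summable (f := fun n => ‖(⟪V n, x⟫ : ℂ)‖) (g := fun n => ‖D n‖)
      (fun n => norm_nonneg _) (fun n => norm_nonneg _)
      (hON.inner_products_summable x) hD

lemma bari_summable (hON : Orthonormal ℂ V)
    (hD : Summable fun n => ‖D n‖ ^ 2) (x : H) :
    Summable fun n => (⟪V n, x⟫ : ℂ) • D n :=
  (bari_term_summable hON hD x).of_norm

lemma bari_norm_le (hON : Orthonormal ℂ V)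
    (hD : Summable fun n => ‖D n‖ ^ 2) (x : H) :
    ‖∑' n, (⟪V n, x⟫ : ℂ) • D n‖ ≤ Real.sqrt (∑' n, ‖D n‖ ^ 2) * ‖x‖ := by
  have h1 : ‖∑' n, (⟪V n, x⟫ : ℂ) • D n‖ ≤ ∑' n, ‖(⟪V n, x⟫ : ℂ) • D n‖ :=
    norm_tsum_le_tsum_norm (bari_term_summable hON hD x)
  have h2 : ∑' n, ‖(⟪V n, x⟫ : ℂ) • D n‖
      = ∑' n, ‖(⟪V n, x⟫ : ℂ)‖ * ‖D n‖ := by simp [norm_smul]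
  have h3 : ∑' n, ‖(⟪V n, x⟫ : ℂ)‖ * ‖D n‖
      ≤ Real.sqrt (∑' n, ‖(⟪V n, x⟫ : ℂ)‖ ^ 2) * Real.sqrt (∑' n, ‖D n‖ ^ 2) :=
    bari_cs (fun n => norm_nonneg _) (fun n => norm_nonneg _)
      (hON.inner_products_summable x) hD
  have h4 : Real.sqrt (∑' n, ‖(⟪V n, x⟫ : ℂ)‖ ^ 2) ≤ ‖x‖ := by
    have := hON.tsum_inner_products_le x
    calc Real.sqrt (∑' n, ‖(⟪V n, x⟫ : ℂ)‖ ^ 2) ≤ Real.sqrt (‖x‖ ^ 2) :=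
          Real.sqrt_le_sqrt this
      _ = ‖x‖ := Real.sqrt_sq (norm_nonneg _)
  calc ‖∑' n, (⟪V n, x⟫ : ℂ) • D n‖ ≤ _ := h1
    _ = _ := h2
    _ ≤ _ := h3
    _ ≤ ‖x‖ * Real.sqrt (∑' n, ‖D n‖ ^ 2) :=
        mul_le_mul_of_nonneg_right h4 (Real.sqrt_nonneg _)
    _ = Real.sqrt (∑' n, ‖D n‖ ^ 2) * ‖x‖ := mul_comm _ _

noncomputable def bariOp (hON : Orthonormal ℂ V)
    (hD : Summable fun n => ‖D n‖ ^ 2) : H →L[ℂ] H :=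
  LinearMap.mkContinuous
    { toFun := fun x => ∑' n, (⟪V n, x⟫ : ℂ) • D n
      map_add' := by
        intro x y
        simp_rw [inner_add_right, add_smul]
        exact Summable.tsum_add (bari_summable hON hD x) (bari_summable hON hD y)
      map_smul' := by
        intro c x
        simp_rw [inner_smul_right, RingHom.id_apply, ← smul_smul]
        exact Summable.tsum_const_smul c (bari_summable hON hD x) }
    (Real.sqrt (∑' n, ‖D n‖ ^ 2)) (fun x => bari_norm_le hON hD x)

lemma bariOp_apply (hON : Orthonormal ℂ V) (hD : Summable fun n => ‖D n‖ ^ 2)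
    (x : H) : bariOp hON hD x = ∑' n, (⟪V n, x⟫ : ℂ) • D n := rfl

lemma bariOp_norm_le (hON : Orthonormal ℂ V) (hD : Summable fun n => ‖D n‖ ^ 2) :
    ‖bariOp hON hD‖ ≤ Real.sqrt (∑' n, ‖D n‖ ^ 2) :=
  LinearMap.mkContinuous_norm_le _ (Real.sqrt_nonneg _) _

lemma bariOp_apply_V (hON : Orthonormal ℂ V) (hD : Summable fun n => ‖D n‖ ^ 2)
    (n : ℕ) : bariOp hON hD (V n) = D n := by
  rw [bariOp_apply]
  rw [tsum_eq_single n]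
  · have h1 : (⟪V n, V n⟫ : ℂ) = 1 := (orthonormal_iff_ite.mp hON n n).trans (by simp)
    rw [h1, one_smul]
  · intro m hm
    have h0 : (⟪V m, V n⟫ : ℂ) = 0 := (orthonormal_iff_ite.mp hON m n).trans (by simp [hm])
    rw [h0, zero_smul]

end BariOp

/-- Bari's theorem: a family `(φₙ)` that is quadratically close to an orthonormal basis
`(Vₙ)`, complete, and ω-linearly independent, is a Riesz basis: it is the image of `(Vₙ)`
under a bounded invertible operator. -/
theorem riesz_basis_of_quadratically_close
    {H : Type*} [NormedAddCommGroup H] [InnerProductSpace ℂ H] [CompleteSpace H]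
    (V : ℕ → H) (hON : Orthonormal ℂ V)
    (htot : (Submodule.span ℂ (Set.range V)).topologicalClosure = ⊤)
    (φ : ℕ → H) (ε : ℕ → ℝ)
    (hclose : ∀ n, ‖φ n - V n‖ ≤ ε n)
    (hε : Summable (fun n => (ε n) ^ 2))
    (hdense : (Submodule.span ℂ (Set.range φ)).topologicalClosure = ⊤)
    (homega : ∀ c : ℕ → ℂ, HasSum (fun n => c n • φ n) 0 → ∀ n, c n = 0) :
    ∃ Φ : H ≃L[ℂ] H, ∀ n, Φ (V n) = φ n := by
  classical
  set D : ℕ → H := fun n => φ n - V n with hDdef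
  have hDsum : Summable (fun n => ‖D n‖ ^ 2) := by
    refine hε.of_nonneg_of_le (fun n => sq_nonneg _) (fun n => ?_)
    have h := hclose n
    have h0 : (0:ℝ) ≤ ‖D n‖ := norm_nonneg _
    nlinarith
  -- the Hilbert basis
  let hb : HilbertBasis ℕ ℂ H := HilbertBasis.mk hON (by rw [htot])
  have hbcoe : ⇑hb = V := HilbertBasis.coe_mk _ _
  -- the perturbation operator
  set T : H →L[ℂ] H := bariOp hON hDsum with hTdef
  set Φ0 : H →L[ℂ] H := 1 + T with hΦ0def
  have hΦ0apply : ∀ x, Φ0 x = x + T x := fun x => rfl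
  have hΦV : ∀ n, Φ0 (V n) = φ n := by
    intro n
    rw [hΦ0apply, hTdef, bariOp_apply_V hON hDsum n]
    simp [hDdef]
  -- injectivity of Φ0
  have hker : ∀ x : H, Φ0 x = 0 → x = 0 := by
    intro x hx
    set c : ℕ → ℂ := fun n => ⟪V n, x⟫ with hcdef
    have h1 : HasSum (fun n => c n • V n) x := by
      have h := hb.hasSum_repr x
      have heq : (fun n => hb.repr x n • hb n) = fun n => c n • V n := by
        funext n
        rw [hb.repr_apply_apply, hbcoe, hcdef]
      rwa [heq] at h
    have h2 : HasSum (fun n => c n • D n) (T x) :=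
      (bari_summable hON hDsum x).hasSum
    have h3 : HasSum (fun n => c n • φ n) 0 := by
      have hsum := h1.add h2
      rw [show x + T x = 0 from hx] at hsum
      have heq : (fun n => c n • V n + c n • D n) = fun n => c n • φ n := by
        funext n
        rw [← smul_add]
        congr 1
        simp [hDdef]
      rwa [heq] at hsum
    have hc0 := homega c h3
    have hx0 : HasSum (fun _ : ℕ => (0:H)) x := by
      have heq : (fun n => c n • V n) = fun _ : ℕ => (0:H) := by
        funext n; rw [hc0 n, zero_smul]
      rwa [heq] at h1
    exact hx0.unique hasSum_zero
  have hΦ0inj : Function.Injective Φ0 := by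
    intro x y hxy
    have h0 : Φ0 (x - y) = 0 := by rw [map_sub, hxy, sub_self]
    exact sub_eq_zero.mp (hker _ h0)
  -- choose N with small tail
  obtain ⟨N, hN⟩ : ∃ N, ∑' k, ‖D (k + N)‖ ^ 2 < 1/4 := by
    have ht := tendsto_sum_nat_add (fun n => ‖D n‖ ^ 2)
    have := ht.eventually_lt_const (show (0:ℝ) < 1/4 by norm_num)
    exact this.exists
  -- split D into head and tail
  set Df : ℕ → H := fun n => if n < N then D n else 0 with hDfdef
  set Dt : ℕ → H := fun n => if n < N then 0 else D n with hDtdef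
  have hDfsum : Summable (fun n => ‖Df n‖ ^ 2) := by
    refine hDsum.of_nonneg_of_le (fun n => sq_nonneg _) (fun n => ?_)
    by_cases h : n < N <;> simp [hDfdef, h, sq_nonneg]
  have hDtsum : Summable (fun n => ‖Dt n‖ ^ 2) := by
    refine hDsum.of_nonneg_of_le (fun n => sq_nonneg _) (fun n => ?_)
    by_cases h : n < N <;> simp [hDtdef, h, sq_nonneg]
  set F : H →L[ℂ] H := bariOp hON hDfsum with hFdef
  set R : H →L[ℂ] H := bariOp hON hDtsum with hRdef
  have hTFR : ∀ x, T x = F x + R x := by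
    intro x
    rw [hTdef, hFdef, hRdef, bariOp_apply, bariOp_apply, bariOp_apply,
      ← Summable.tsum_add (bari_summable hON hDfsum x) (bari_summable hON hDtsum x)]
    congr 1
    funext n
    rw [← smul_add]
    congr 1
    by_cases h : n < N <;> simp [hDfdef, hDtdef, h]
  -- R is small
  have hRnorm : ‖R‖ < 1/2 := by
    have h1 : ‖R‖ ≤ Real.sqrt (∑' n, ‖Dt n‖ ^ 2) := bariOp_norm_le hON hDtsum
    have h2 : ∑' n, ‖Dt n‖ ^ 2 = ∑' k, ‖Dt (k + N)‖ ^ 2 := by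
      rw [← Summable.sum_add_tsum_nat_add N hDtsum]
      have : ∀ i ∈ Finset.range N, ‖Dt i‖ ^ 2 = 0 := by
        intro i hi
        simp [hDtdef, Finset.mem_range.mp hi]
      rw [Finset.sum_congr rfl this]
      simp
    have h3 : ∑' k, ‖Dt (k + N)‖ ^ 2 = ∑' k, ‖D (k + N)‖ ^ 2 := by
      congr 1
      funext k
      simp [hDtdef, Nat.not_lt.mpr (Nat.le_add_left N k)]
    have h4 : ∑' n, ‖Dt n‖ ^ 2 < 1/4 := by rw [h2, h3]; exact hN
    calc ‖R‖ ≤ Real.sqrt (∑' n, ‖Dt n‖ ^ 2) := h1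
      _ < 1/2 := by
          rw [show (1:ℝ)/2 = Real.sqrt (1/4) by
            rw [show (1:ℝ)/4 = (1/2)^2 by norm_num, Real.sqrt_sq (by norm_num)]]
          exact Real.sqrt_lt_sqrt (tsum_nonneg fun n => sq_nonneg _) h4
  -- 1 + R is invertible
  have hnegR : ‖-R‖ < 1 := by rw [norm_neg]; linarith
  set u : (H →L[ℂ] H)ˣ := Units.oneSub (-R) hnegR with hudef
  set S : H →L[ℂ] H := (u : H →L[ℂ] H) with hSdef
  set Sinv : H →L[ℂ] H := ((u⁻¹ : (H →L[ℂ] H)ˣ) : H →L[ℂ] H) with hSinvdef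
  have hScoe : S = 1 + R := by rw [hSdef, hudef]; simp [Units.oneSub]
  have hSinvS : ∀ x, Sinv (S x) = x := by
    intro x
    have : (Sinv * S : H →L[ℂ] H) = 1 := by
      rw [hSinvdef, hSdef, ← Units.val_mul, inv_mul_cancel, Units.val_one]
    calc Sinv (S x) = (Sinv * S : H →L[ℂ] H) x := rfl
      _ = x := by rw [this]; rfl
  have hSSinv : ∀ x, S (Sinv x) = x := by
    intro x
    have : (S * Sinv : H →L[ℂ] H) = 1 := by
      rw [hSinvdef, hSdef, ← Units.val_mul, mul_inv_cancel, Units.val_one]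
    calc S (Sinv x) = (S * Sinv : H →L[ℂ] H) x := rfl
      _ = x := by rw [this]; rfl
  -- the finite-rank part after conjugation
  set G : H →L[ℂ] H := Sinv.comp F with hGdef
  have hΦ0SG : ∀ x, Φ0 x = S (x + G x) := by
    intro x
    rw [map_add, hGdef, ContinuousLinearMap.comp_apply, hSSinv, hScoe]
    calc Φ0 x = x + T x := hΦ0apply x
      _ = x + (F x + R x) := by rw [hTFR]
      _ = (1 + R : H →L[ℂ] H) x + F x := by
          rw [ContinuousLinearMap.add_apply, ContinuousLinearMap.one_apply]; abel
  -- the finite-dimensional subspace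
  set W : Submodule ℂ H := Submodule.span ℂ (Set.range (fun i : Fin N => Sinv (D i))) with hWdef
  have hWfin : FiniteDimensional ℂ W := by
    rw [hWdef]
    exact FiniteDimensional.span_of_finite ℂ (Set.finite_range _)
  have hFx : ∀ x, F x = ∑ n ∈ Finset.range N, (⟪V n, x⟫ : ℂ) • D n := by
    intro x
    rw [hFdef, bariOp_apply]
    have hz : ∀ n ∉ Finset.range N, (⟪V n, x⟫ : ℂ) • Df n = 0 := by
      intro n hn
      have : ¬ n < N := by simpa using hn
      simp [hDfdef, this]
    rw [tsum_eq_sum hz]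
    refine Finset.sum_congr rfl (fun n hn => ?_)
    rw [hDfdef]
    simp [Finset.mem_range.mp hn]
  have hGW : ∀ x, G x ∈ W := by
    intro x
    rw [hGdef, ContinuousLinearMap.comp_apply, hFx, map_sum]
    refine Submodule.sum_mem _ (fun n hn => ?_)
    rw [map_smul]
    refine Submodule.smul_mem _ _ (Submodule.subset_span ?_)
    exact ⟨⟨n, Finset.mem_range.mp hn⟩, rfl⟩
  -- 1 + G is injective
  have hIGinj : ∀ x y : H, x + G x = y + G y → x = y := by
    intro x y hxy
    apply hΦ0inj
    rw [hΦ0SG, hΦ0SG, hxy]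
  -- restrict 1 + G to W
  set e : W →ₗ[ℂ] W :=
    LinearMap.restrict ((1 + G : H →L[ℂ] H) : H →ₗ[ℂ] H)
      (fun x hx => W.add_mem hx (hGW x)) with hedef
  have heinj : Function.Injective e := by
    intro a b hab
    have : ((1 + G : H →L[ℂ] H) : H →ₗ[ℂ] H) a = ((1 + G : H →L[ℂ] H) : H →ₗ[ℂ] H) b := by
      have := congrArg (Subtype.val) hab
      simpa [hedef, LinearMap.restrict_apply] using this
    have h2 : (a : H) + G a = (b : H) + G b := by
      simpa [ContinuousLinearMap.add_apply, ContinuousLinearMap.one_apply] using this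
    exact Subtype.ext (hIGinj _ _ h2)
  have hesurj : Function.Surjective e := LinearMap.injective_iff_surjective.mp heinj
  -- 1 + G is surjective
  have hIGsurj : ∀ y : H, ∃ x : H, x + G x = y := by
    intro y
    obtain ⟨w, hw⟩ := hesurj ⟨G y, hGW y⟩
    have hw' : (w : H) + G w = G y := by
      have := congrArg (Subtype.val) hw
      simpa [hedef, LinearMap.restrict_apply, ContinuousLinearMap.add_apply,
        ContinuousLinearMap.one_apply] using this
    refine ⟨y - w, ?_⟩
    rw [map_sub]
    have : (y : H) - w + (G y - G w) = y + (G y - ((w : H) + G w)) := by abel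
    rw [this, hw', sub_self, add_zero]
  -- Φ0 is surjective
  have hΦ0surj : Function.Surjective Φ0 := by
    intro y
    obtain ⟨z, hz⟩ := hIGsurj (Sinv y)
    exact ⟨z, by rw [hΦ0SG, hz, hSSinv]⟩
  -- build the equivalence
  have hkerΦ0 : LinearMap.ker (Φ0 : H →ₗ[ℂ] H) = ⊥ := LinearMap.ker_eq_bot.mpr hΦ0inj
  have hrangeΦ0 : LinearMap.range (Φ0 : H →ₗ[ℂ] H) = ⊤ := LinearMap.range_eq_top.mpr hΦ0surj
  refine ⟨ContinuousLinearEquiv.ofBijective Φ0 hkerΦ0 hrangeΦ0, fun n => ?_⟩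
  exact hΦV n
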